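/- For a partition κ with s parts, the set B_κ of semistandard Young tableaux of shape κ with entries in {1,…,s}, equipped with the standard raising and lowering tableau crystal operators e_i, f_i (1 ≤ i ≤ s−1) and the weight map sending a tableau to (the class of) its content, is a connected crystal with a unique highest weight element, namely the tableau of shape κ and content κ. -/

import Mathlib

open scoped Classical

namespace PaperFormal

/-- A filling of the plane by natural-number entries (0-based letters);
cells outside the relevant shape carry the junk value `0`. -/
abbrev Filling := ℕ → ℕ → ℕ

/-- A shape: a finite set of cells `(row, column)`. -/
abbrev Shape := Finset (ℕ × ℕ)

noncomputable def width (D : Shape) : ℕ := D.sup (fun c => c.2) + 1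
noncomputable def height (D : Shape) : ℕ := D.sup (fun c => c.1) + 1

/-- `T` is a semistandard (column-strict) filling of the cell set `D`:
entries weakly increase along rows, strictly increase down columns, and
vanish outside `D`. -/
def SsytOn (D : Shape) (T : Filling) : Prop :=
  (∀ i j1 j2, j1 ≤ j2 → (i, j1) ∈ D → (i, j2) ∈ D → T i j1 ≤ T i j2) ∧
  (∀ i1 i2 j, i1 < i2 → (i1, j) ∈ D → (i2, j) ∈ D → T i1 j < T i2 j) ∧
  (∀ i j, (i, j) ∉ D → T i j = 0)

/-- All entries of `T` on `D` lie in the alphabet `{0, …, N-1}`. -/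
def EntriesLT (D : Shape) (N : ℕ) (T : Filling) : Prop := ∀ c ∈ D, T c.1 c.2 < N

/-- The number of occurrences of the letter `a` in `T` (the content of `T` at `a`). -/
noncomputable def content (D : Shape) (T : Filling) (a : ℕ) : ℕ :=
  (D.filter (fun c => T c.1 c.2 = a)).card

/-- The (column) reading word of `T`: columns left to right, each read
bottom to top. -/
noncomputable def readingWord (D : Shape) (T : Filling) : List ℕ :=
  (List.range (width D)).flatMap (fun j =>
    (List.range (height D)).reverse.filterMap (fun i =>
      if (i, j) ∈ D then some (T i j) else none))

/-- `w` is Yamanouchi with respect to the letters `a` and `a+1`: every suffix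
contains at least as many `a`'s as `(a+1)`'s. -/
def YamPair (w : List ℕ) (a : ℕ) : Prop :=
  ∀ k, (w.drop k).count (a + 1) ≤ (w.drop k).count a

/-- `w` is anti-Yamanouchi with respect to `a` and `a+1`: every suffix contains
at most as many `a`'s as `(a+1)`'s. -/
def AntiYamPair (w : List ℕ) (a : ℕ) : Prop :=
  ∀ k, (w.drop k).count a ≤ (w.drop k).count (a + 1)

/-- `h_{a,j}`: number of `(a+1)`'s in column `j` or to the right, minus the
number of `a`'s there (Kashiwara–Nakashima signature rule). -/
noncomputable def hval (D : Shape) (T : Filling) (a j : ℕ) : ℤ :=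
  ((D.filter (fun c => j ≤ c.2 ∧ T c.1 c.2 = a + 1)).card : ℤ) -
  ((D.filter (fun c => j ≤ c.2 ∧ T c.1 c.2 = a)).card : ℤ)

/-- `k_{a,j}`: number of `a`'s in column `j` or to the left, minus the number of
`(a+1)`'s there. -/
noncomputable def kval (D : Shape) (T : Filling) (a j : ℕ) : ℤ :=
  ((D.filter (fun c => c.2 ≤ j ∧ T c.1 c.2 = a)).card : ℤ) -
  ((D.filter (fun c => c.2 ≤ j ∧ T c.1 c.2 = a + 1)).card : ℤ)

/-- The raising crystal operator `e_a`: turn an `a+1` into an `a` in the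
rightmost column where `h_{a,·}` is maximal and positive, if any. -/
noncomputable def eOp (D : Shape) (a : ℕ) (T : Filling) : Option Filling :=
  let F := (Finset.range (width D)).filter (fun j =>
    0 < hval D T a j ∧ ∀ j' ∈ Finset.range (width D), hval D T a j' ≤ hval D T a j)
  if h : F.Nonempty then
    some (fun i j => if (i, j) ∈ D ∧ j = F.max' h ∧ T i j = a + 1 then a else T i j)
  else none

/-- The lowering crystal operator `f_a`: turn an `a` into an `a+1` in the
leftmost column where `k_{a,·}` is maximal and positive, if any. -/
noncomputable def fOp (D : Shape) (a : ℕ) (T : Filling) : Option Filling :=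
  let F := (Finset.range (width D)).filter (fun j =>
    0 < kval D T a j ∧ ∀ j' ∈ Finset.range (width D), kval D T a j' ≤ kval D T a j)
  if h : F.Nonempty then
    some (fun i j => if (i, j) ∈ D ∧ j = F.min' h ∧ T i j = a then a + 1 else T i j)
  else none

/-- Iterate an `Option`-valued operator. -/
noncomputable def opIter (op : Filling → Option Filling) : ℕ → Filling → Option Filling
  | 0, T => some T
  | (l + 1), T => (op T).bind (opIter op l)

/-- `ε_a(T)`: the maximal number of applications of `e_a` not vanishing. -/
noncomputable def epsNum (D : Shape) (a : ℕ) (T : Filling) : ℕ :=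
  sSup {l : ℕ | opIter (eOp D a) l T ≠ none}

/-- `φ_a(T)`: the maximal number of applications of `f_a` not vanishing. -/
noncomputable def phiNum (D : Shape) (a : ℕ) (T : Filling) : ℕ :=
  sSup {l : ℕ | opIter (fOp D a) l T ≠ none}

/-- Update a single entry of a filling. -/
def updF (T : Filling) (a b v : ℕ) : Filling :=
  fun i j => if i = a ∧ j = b then v else T i j

/-- `c` is an inside corner of the skew shape `λ/μ`: a cell of `μ` having
neither the cell below nor the cell to its right in `μ`. -/
def IsInsideCorner (mu : Shape) (c : ℕ × ℕ) : Prop :=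
  c ∈ mu ∧ (c.1 + 1, c.2) ∉ mu ∧ (c.1, c.2 + 1) ∉ mu

/-- The path of a jeu-de-taquin slide inside the diagram `lam`, with fuel. -/
noncomputable def slidePath (lam : Shape) : ℕ → Filling → ℕ × ℕ → Filling × (ℕ × ℕ)
  | 0, T, p => (T, p)
  | (fuel + 1), T, p =>
    if (p.1 + 1, p.2) ∈ lam ∧ ((p.1, p.2 + 1) ∉ lam ∨ T (p.1 + 1) p.2 ≤ T p.1 (p.2 + 1)) then
      slidePath lam fuel (updF T p.1 p.2 (T (p.1 + 1) p.2)) (p.1 + 1, p.2)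
    else if (p.1, p.2 + 1) ∈ lam then
      slidePath lam fuel (updF T p.1 p.2 (T p.1 (p.2 + 1))) (p.1, p.2 + 1)
    else (T, p)

/-- A jeu-de-taquin slide of `T` starting at the inside corner `C`; returns the
new filling (with the vacated final box zeroed out) together with the final
(removed) box. -/
noncomputable def jdtSlide (lam : Shape) (T : Filling) (C : ℕ × ℕ) : Filling × (ℕ × ℕ) :=
  let r := slidePath lam (lam.card + 1) T C
  (updF r.1 r.2.1 r.2.2 0, r.2)

/-- The last cell of the last nonempty row of `mu`; for a Young diagram `mu`
this is an outer corner of `mu`, hence an inside corner of any skew shape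
`lam/mu`. -/
noncomputable def pickCorner (mu : Shape) : ℕ × ℕ :=
  (mu.sup (fun c => c.1),
    mu.sup (fun c => if c.1 = mu.sup (fun c' => c'.1) then c.2 else 0))

/-- Rectification: repeatedly slide at a canonical inside corner until the
inner shape is exhausted; returns the final cell set and filling. -/
noncomputable def rectAux : ℕ → Shape → Shape → Filling → Shape × Filling
  | 0, lam, mu, T => (lam \ mu, T)
  | (fuel + 1), lam, mu, T =>
    if mu.Nonempty then
      rectAux fuel (lam.erase (jdtSlide lam T (pickCorner mu)).2) (mu.erase (pickCorner mu))
        (jdtSlide lam T (pickCorner mu)).1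
    else (lam \ mu, T)

/-- Jeu-de-taquin rectification of the skew tableau `T` of shape `lam/mu`. -/
noncomputable def rect (lam mu : Shape) (T : Filling) : Shape × Filling :=
  rectAux mu.card lam mu T

/-- Jeu-de-taquin demotion with alphabet `{0, …, s-1}`: delete the boxes with
entry `0`, decrement all other entries, rectify, and fill the vacated
horizontal strip with the entry `s - 1`. -/
noncomputable def demote (D : Shape) (s : ℕ) (T : Filling) : Filling :=
  let mu := D.filter (fun c => T c.1 c.2 = 0)
  let r := rect D mu (fun i j => if (i, j) ∈ D ∧ (i, j) ∉ mu then T i j - 1 else 0)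
  fun i j => if (i, j) ∈ D then (if (i, j) ∈ r.1 then r.2 i j else s - 1) else 0

/-- `pr` is jeu-de-taquin promotion on the semistandard tableaux of shape `D`
with entries `< s`: it is the (two-sided, by injectivity of demotion) inverse
of demotion on that set. -/
def IsPromotion (D : Shape) (s : ℕ) (pr : Filling → Filling) : Prop :=
  ∀ T, SsytOn D T → EntriesLT D s T →
    SsytOn D (pr T) ∧ EntriesLT D s (pr T) ∧ demote D s (pr T) = T

/-- Auxiliary recursion for the Schützenberger involution: repeatedly demote
(without refilling) and record the vacated skew strips, filling the strip
vacated at stage `u+1` with the entry `u`. -/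
noncomputable def evacAux : ℕ → Shape → Filling → Filling
  | 0, _, _ => fun _ _ => 0
  | (u + 1), D, T =>
    fun i j =>
      if (i, j) ∈ D ∧
          (i, j) ∉ (rect D (D.filter (fun c => T c.1 c.2 = 0))
            (fun i' j' => if (i', j') ∈ D ∧ (i', j') ∉ D.filter (fun c => T c.1 c.2 = 0)
              then T i' j' - 1 else 0)).1 then u
      else evacAux u
        (rect D (D.filter (fun c => T c.1 c.2 = 0))
          (fun i' j' => if (i', j') ∈ D ∧ (i', j') ∉ D.filter (fun c => T c.1 c.2 = 0)
            then T i' j' - 1 else 0)).1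
        (rect D (D.filter (fun c => T c.1 c.2 = 0))
          (fun i' j' => if (i', j') ∈ D ∧ (i', j') ∉ D.filter (fun c => T c.1 c.2 = 0)
            then T i' j' - 1 else 0)).2 i j

/-- The Schützenberger involution (evacuation) on semistandard tableaux of
shape `D` with entries in `{0, …, s-1}`. -/
noncomputable def evac (s : ℕ) (D : Shape) (T : Filling) : Filling := evacAux s D T

end PaperFormal

namespace PaperFormal

lemma width_pos (D : Shape) : 0 < width D := Nat.succ_pos _

lemma col_lt_width {D : Shape} {c : ℕ × ℕ} (hc : c ∈ D) : c.2 < width D :=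
  Nat.lt_succ_of_le (Finset.le_sup hc)

lemma range_width_nonempty (D : Shape) : (Finset.range (width D)).Nonempty :=
  Finset.nonempty_range_iff.mpr (width_pos D).ne'

noncomputable def Mh (D : Shape) (T : Filling) (a : ℕ) : ℤ :=
  (Finset.range (width D)).sup' (range_width_nonempty D) (hval D T a)

noncomputable def Mk (D : Shape) (T : Filling) (a : ℕ) : ℤ :=
  (Finset.range (width D)).sup' (range_width_nonempty D) (kval D T a)

lemma hval_le_Mh {D : Shape} {T : Filling} {a j : ℕ} (hj : j ∈ Finset.range (width D)) :
    hval D T a j ≤ Mh D T a := Finset.le_sup' _ hj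

lemma kval_le_Mk {D : Shape} {T : Filling} {a j : ℕ} (hj : j ∈ Finset.range (width D)) :
    kval D T a j ≤ Mk D T a := Finset.le_sup' _ hj

/-- count of letter `v` in column `j`. -/
noncomputable def cnt (D : Shape) (T : Filling) (v j : ℕ) : ℕ :=
  (D.filter (fun c => c.2 = j ∧ T c.1 c.2 = v)).card

lemma filter_split_ge (D : Shape) (T : Filling) (v j : ℕ) :
    (D.filter (fun c => j ≤ c.2 ∧ T c.1 c.2 = v)).card
      = cnt D T v j + (D.filter (fun c => j + 1 ≤ c.2 ∧ T c.1 c.2 = v)).card := by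
  unfold cnt
  rw [← Finset.card_union_of_disjoint]
  · congr 1
    ext c
    simp only [Finset.mem_filter, Finset.mem_union]
    constructor
    · rintro ⟨h1, h2, h3⟩
      rcases eq_or_lt_of_le h2 with h | h
      · exact Or.inl ⟨h1, h.symm, h3⟩
      · exact Or.inr ⟨h1, h, h3⟩
    · rintro (⟨h1, h2, h3⟩ | ⟨h1, h2, h3⟩)
      · exact ⟨h1, le_of_eq h2.symm, h3⟩
      · exact ⟨h1, le_trans (Nat.le_succ j) h2, h3⟩
  · rw [Finset.disjoint_left]
    intro c h1 h2
    simp only [Finset.mem_filter] at h1 h2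
    omega

lemma filter_split_le (D : Shape) (T : Filling) (v j : ℕ) :
    (D.filter (fun c => c.2 ≤ j + 1 ∧ T c.1 c.2 = v)).card
      = (D.filter (fun c => c.2 ≤ j ∧ T c.1 c.2 = v)).card + cnt D T v (j + 1) := by
  unfold cnt
  rw [← Finset.card_union_of_disjoint]
  · congr 1
    ext c
    simp only [Finset.mem_filter, Finset.mem_union]
    constructor
    · rintro ⟨h1, h2, h3⟩
      rcases eq_or_lt_of_le h2 with h | h
      · exact Or.inr ⟨h1, h, h3⟩
      · exact Or.inl ⟨h1, by omega, h3⟩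
    · rintro (⟨h1, h2, h3⟩ | ⟨h1, h2, h3⟩)
      · exact ⟨h1, by omega, h3⟩
      · exact ⟨h1, le_of_eq h2, h3⟩
  · rw [Finset.disjoint_left]
    intro c h1 h2
    simp only [Finset.mem_filter] at h1 h2
    omega

lemma hval_succ (D : Shape) (T : Filling) (a j : ℕ) :
    hval D T a j = (cnt D T (a + 1) j : ℤ) - (cnt D T a j : ℤ) + hval D T a (j + 1) := by
  unfold hval
  rw [filter_split_ge D T (a + 1) j, filter_split_ge D T a j]
  push_cast
  ring

lemma hval_of_width_le {D : Shape} {T : Filling} {a j : ℕ} (h : width D ≤ j) :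
    hval D T a j = 0 := by
  unfold hval
  have e : ∀ v : ℕ, D.filter (fun c => j ≤ c.2 ∧ T c.1 c.2 = v) = ∅ := by
    intro v
    rw [Finset.filter_eq_empty_iff]
    intro c hc hcon
    exact absurd (le_trans h hcon.1) (not_le.mpr (col_lt_width hc))
  rw [e (a + 1), e a]
  simp

lemma kval_zero (D : Shape) (T : Filling) (a : ℕ) :
    kval D T a 0 = (cnt D T a 0 : ℤ) - (cnt D T (a + 1) 0 : ℤ) := by
  unfold kval cnt
  have e : ∀ v : ℕ, D.filter (fun c => c.2 ≤ 0 ∧ T c.1 c.2 = v)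
      = D.filter (fun c => c.2 = 0 ∧ T c.1 c.2 = v) := by
    intro v
    apply Finset.filter_congr
    intro c _
    simp [Nat.le_zero]
  rw [e (a + 1), e a]

lemma kval_succ (D : Shape) (T : Filling) (a j : ℕ) :
    kval D T a (j + 1) = kval D T a j + ((cnt D T a (j + 1) : ℤ) - (cnt D T (a + 1) (j + 1) : ℤ)) := by
  unfold kval
  rw [filter_split_le D T a j, filter_split_le D T (a + 1) j]
  push_cast
  ring

lemma card_le_add_ge (D : Shape) (T : Filling) (v j : ℕ) :
    (D.filter (fun c => c.2 ≤ j ∧ T c.1 c.2 = v)).card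
      + (D.filter (fun c => j + 1 ≤ c.2 ∧ T c.1 c.2 = v)).card
      = (D.filter (fun c => 0 ≤ c.2 ∧ T c.1 c.2 = v)).card := by
  rw [← Finset.card_union_of_disjoint]
  · congr 1
    ext c
    simp only [Finset.mem_filter, Finset.mem_union]
    constructor
    · rintro (⟨h1, _, h3⟩ | ⟨h1, _, h3⟩) <;> exact ⟨h1, Nat.zero_le _, h3⟩
    · rintro ⟨h1, _, h3⟩
      rcases le_or_gt c.2 j with h | h
      · exact Or.inl ⟨h1, h, h3⟩
      · exact Or.inr ⟨h1, h, h3⟩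
  · rw [Finset.disjoint_left]
    intro c h1 h2
    simp only [Finset.mem_filter] at h1 h2
    omega

lemma kval_eq (D : Shape) (T : Filling) (a j : ℕ) :
    kval D T a j = hval D T a (j + 1) - hval D T a 0 := by
  unfold kval hval
  have e1 := card_le_add_ge D T a j
  have e2 := card_le_add_ge D T (a + 1) j
  have e1' : ((D.filter (fun c => c.2 ≤ j ∧ T c.1 c.2 = a)).card : ℤ)
      + ((D.filter (fun c => j + 1 ≤ c.2 ∧ T c.1 c.2 = a)).card : ℤ)
      = ((D.filter (fun c => 0 ≤ c.2 ∧ T c.1 c.2 = a)).card : ℤ) := by exact_mod_cast e1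
  have e2' : ((D.filter (fun c => c.2 ≤ j ∧ T c.1 c.2 = a + 1)).card : ℤ)
      + ((D.filter (fun c => j + 1 ≤ c.2 ∧ T c.1 c.2 = a + 1)).card : ℤ)
      = ((D.filter (fun c => 0 ≤ c.2 ∧ T c.1 c.2 = a + 1)).card : ℤ) := by exact_mod_cast e2
  linarith

lemma content_hval (D : Shape) (T : Filling) (a : ℕ) :
    hval D T a 0 = (content D T (a + 1) : ℤ) - (content D T a : ℤ) := by
  unfold hval content
  have e : ∀ v : ℕ, D.filter (fun c => 0 ≤ c.2 ∧ T c.1 c.2 = v)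
      = D.filter (fun c => T c.1 c.2 = v) := by
    intro v
    apply Finset.filter_congr
    intro c _
    simp
  rw [e (a + 1), e a]

lemma cnt_le_one {D : Shape} {T : Filling} (hT : SsytOn D T) (v j : ℕ) :
    cnt D T v j ≤ 1 := by
  refine Finset.card_le_one.mpr ?_
  rintro ⟨i1, j1⟩ h1 ⟨i2, j2⟩ h2
  simp only [Finset.mem_filter] at h1 h2
  obtain ⟨m1, hj1, e1⟩ := h1
  obtain ⟨m2, hj2, e2⟩ := h2

  have hj : j2 = j1 := hj2.trans hj1.symm
  subst hj
  rcases lt_trichotomy i1 i2 with h | h | h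
  · exact absurd (hT.2.1 i1 i2 j2 h m1 m2) (by omega)
  · exact Prod.ext h rfl
  · exact absurd (hT.2.1 i2 i1 j2 h m2 m1) (by omega)

/-- Key single-cell update counting lemma. -/
lemma card_filter_update (D : Shape) (T T' : Filling) (c0 : ℕ × ℕ) (hc0 : c0 ∈ D)
    (hag : ∀ c : ℕ × ℕ, c ≠ c0 → T' c.1 c.2 = T c.1 c.2)
    (hne : T c0.1 c0.2 ≠ T' c0.1 c0.2)
    (p : ℕ × ℕ → Prop) [DecidablePred p] :
    (D.filter (fun c => p c ∧ T' c.1 c.2 = T' c0.1 c0.2)).card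
      = (D.filter (fun c => p c ∧ T c.1 c.2 = T' c0.1 c0.2)).card
        + (if p c0 then 1 else 0) := by
  by_cases hp : p c0
  · rw [if_pos hp]
    have hins : D.filter (fun c => p c ∧ T' c.1 c.2 = T' c0.1 c0.2)
        = insert c0 (D.filter (fun c => p c ∧ T c.1 c.2 = T' c0.1 c0.2)) := by
      ext c
      simp only [Finset.mem_insert, Finset.mem_filter]
      constructor
      · rintro ⟨hcD, hpc, hv⟩
        by_cases h : c = c0
        · exact Or.inl h
        · exact Or.inr ⟨hcD, hpc, by rw [← hag c h]; exact hv⟩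
      · rintro (rfl | ⟨hcD, hpc, hv⟩)
        · exact ⟨hc0, hp, rfl⟩
        · have h : c ≠ c0 := by rintro rfl; exact hne hv
          exact ⟨hcD, hpc, by rw [hag c h]; exact hv⟩
    rw [hins, Finset.card_insert_of_notMem]
    simp only [Finset.mem_filter]
    rintro ⟨_, _, hv⟩
    exact hne hv
  · rw [if_neg hp, add_zero]
    congr 1
    ext c
    simp only [Finset.mem_filter]
    constructor <;> rintro ⟨hcD, hpc, hv⟩
    · have h : c ≠ c0 := by rintro rfl; exact hp hpc
      exact ⟨hcD, hpc, by rw [← hag c h]; exact hv⟩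
    · have h : c ≠ c0 := by rintro rfl; exact hp hpc
      exact ⟨hcD, hpc, by rw [hag c h]; exact hv⟩

lemma filter_update_other (D : Shape) (T T' : Filling) (c0 : ℕ × ℕ)
    (hag : ∀ c : ℕ × ℕ, c ≠ c0 → T' c.1 c.2 = T c.1 c.2)
    (p : ℕ × ℕ → Prop) [DecidablePred p] (u : ℕ)
    (hu : u ≠ T c0.1 c0.2) (hu' : u ≠ T' c0.1 c0.2) :
    D.filter (fun c => p c ∧ T' c.1 c.2 = u) = D.filter (fun c => p c ∧ T c.1 c.2 = u) := by
  ext c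
  simp only [Finset.mem_filter]
  constructor <;> rintro ⟨hcD, hpc, hv⟩
  · have h : c ≠ c0 := by rintro rfl; exact hu' hv.symm
    exact ⟨hcD, hpc, by rw [← hag c h]; exact hv⟩
  · have h : c ≠ c0 := by rintro rfl; exact hu hv.symm
    exact ⟨hcD, hpc, by rw [hag c h]; exact hv⟩

section Update

variable {D : Shape} {T T' : Filling} {c0 : ℕ × ℕ} {a : ℕ}

lemma hval_update (hc0 : c0 ∈ D)
    (hag : ∀ c : ℕ × ℕ, c ≠ c0 → T' c.1 c.2 = T c.1 c.2)
    (hv : T c0.1 c0.2 = a + 1) (hv' : T' c0.1 c0.2 = a) (j : ℕ) :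
    hval D T' a j = hval D T a j - (if j ≤ c0.2 then 2 else 0) := by
  have hne : T c0.1 c0.2 ≠ T' c0.1 c0.2 := by rw [hv, hv']; omega
  have h1 := card_filter_update D T T' c0 hc0 hag hne (fun c => j ≤ c.2)
  rw [hv'] at h1
  have h2 := card_filter_update D T' T c0 hc0 (fun c h => (hag c h).symm) hne.symm
    (fun c => j ≤ c.2)
  rw [hv] at h2
  unfold hval
  try simp only [Finset.filter_congr_decidable] at h1 h2 ⊢
  by_cases hle : j ≤ c0.2 <;> simp only [if_pos, if_neg, hle, if_true, if_false] <;>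
    simp only [hle, if_true, if_false] at h1 h2 <;> omega

lemma kval_update_f (hc0 : c0 ∈ D)
    (hag : ∀ c : ℕ × ℕ, c ≠ c0 → T' c.1 c.2 = T c.1 c.2)
    (hv : T c0.1 c0.2 = a) (hv' : T' c0.1 c0.2 = a + 1) (j : ℕ) :
    kval D T' a j = kval D T a j - (if c0.2 ≤ j then 2 else 0) := by
  have hne : T c0.1 c0.2 ≠ T' c0.1 c0.2 := by rw [hv, hv']; omega
  have h1 := card_filter_update D T T' c0 hc0 hag hne (fun c => c.2 ≤ j)
  rw [hv'] at h1
  have h2 := card_filter_update D T' T c0 hc0 (fun c h => (hag c h).symm) hne.symm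
    (fun c => c.2 ≤ j)
  rw [hv] at h2
  unfold kval
  try simp only [Finset.filter_congr_decidable] at h1 h2 ⊢
  by_cases hle : c0.2 ≤ j <;> simp only [if_pos, if_neg, hle, if_true, if_false] <;>
    simp only [hle, if_true, if_false] at h1 h2 <;> omega

/-- kval change under an `e`-type update (a+1 ↦ a at c0). -/
lemma kval_update_e (hc0 : c0 ∈ D)
    (hag : ∀ c : ℕ × ℕ, c ≠ c0 → T' c.1 c.2 = T c.1 c.2)
    (hv : T c0.1 c0.2 = a + 1) (hv' : T' c0.1 c0.2 = a) (j : ℕ) :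
    kval D T' a j = kval D T a j + (if c0.2 ≤ j then 2 else 0) := by
  have hne : T c0.1 c0.2 ≠ T' c0.1 c0.2 := by rw [hv, hv']; omega
  have h1 := card_filter_update D T T' c0 hc0 hag hne (fun c => c.2 ≤ j)
  rw [hv'] at h1
  have h2 := card_filter_update D T' T c0 hc0 (fun c h => (hag c h).symm) hne.symm
    (fun c => c.2 ≤ j)
  rw [hv] at h2
  unfold kval
  try simp only [Finset.filter_congr_decidable] at h1 h2 ⊢
  by_cases hle : c0.2 ≤ j <;> simp only [if_pos, if_neg, hle, if_true, if_false] <;>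
    simp only [hle, if_true, if_false] at h1 h2 <;> omega

/-- hval change under an `f`-type update (a ↦ a+1 at c0). -/
lemma hval_update_f (hc0 : c0 ∈ D)
    (hag : ∀ c : ℕ × ℕ, c ≠ c0 → T' c.1 c.2 = T c.1 c.2)
    (hv : T c0.1 c0.2 = a) (hv' : T' c0.1 c0.2 = a + 1) (j : ℕ) :
    hval D T' a j = hval D T a j + (if j ≤ c0.2 then 2 else 0) := by
  have hne : T c0.1 c0.2 ≠ T' c0.1 c0.2 := by rw [hv, hv']; omega
  have h1 := card_filter_update D T T' c0 hc0 hag hne (fun c => j ≤ c.2)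
  rw [hv'] at h1
  have h2 := card_filter_update D T' T c0 hc0 (fun c h => (hag c h).symm) hne.symm
    (fun c => j ≤ c.2)
  rw [hv] at h2
  unfold hval
  try simp only [Finset.filter_congr_decidable] at h1 h2 ⊢
  by_cases hle : j ≤ c0.2 <;> simp only [if_pos, if_neg, hle, if_true, if_false] <;>
    simp only [hle, if_true, if_false] at h1 h2 <;> omega

lemma content_update (hc0 : c0 ∈ D)
    (hag : ∀ c : ℕ × ℕ, c ≠ c0 → T' c.1 c.2 = T c.1 c.2)
    (hne : T c0.1 c0.2 ≠ T' c0.1 c0.2) :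
    content D T' (T' c0.1 c0.2) = content D T (T' c0.1 c0.2) + 1 ∧
    content D T (T c0.1 c0.2) = content D T' (T c0.1 c0.2) + 1 ∧
    ∀ b, b ≠ T c0.1 c0.2 → b ≠ T' c0.1 c0.2 → content D T' b = content D T b := by
  have h1 := card_filter_update D T T' c0 hc0 hag hne (fun _ => True)
  have h2 := card_filter_update D T' T c0 hc0 (fun c h => (hag c h).symm) hne.symm
    (fun _ => True)
  simp only [if_true, true_and] at h1 h2
  unfold content
  try simp only [Finset.filter_congr_decidable] at h1 h2 ⊢
  refine ⟨h1, h2, fun b hb hb' => ?_⟩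
  have h3 := filter_update_other D T T' c0 hag (fun _ => True) b hb hb'
  simp only [true_and] at h3
  rw [h3]

end Update

lemma eOp_anatomy {D : Shape} {T T' : Filling} {a : ℕ} (hT : SsytOn D T)
    (h : eOp D a T = some T') :
    ∃ c0 : ℕ × ℕ, c0 ∈ D ∧ T c0.1 c0.2 = a + 1 ∧ T' c0.1 c0.2 = a ∧
      (∀ c : ℕ × ℕ, c ≠ c0 → T' c.1 c.2 = T c.1 c.2) ∧
      (∀ c ∈ D, c.2 = c0.2 → T c.1 c.2 ≠ a) ∧
      (∀ c ∈ D, c.2 = c0.2 → T c.1 c.2 = a + 1 → c = c0) ∧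
      hval D T a c0.2 = Mh D T a ∧ 0 < Mh D T a ∧
      (∀ j ∈ Finset.range (width D), c0.2 < j → hval D T a j < Mh D T a) ∧
      hval D T a (c0.2 + 1) = Mh D T a - 1 := by
  simp only [eOp] at h
  split at h
  case isFalse => exact absurd h (by simp)
  case isTrue hF =>
    replace h := Option.some.inj h
    set F := (Finset.range (width D)).filter (fun j =>
      0 < hval D T a j ∧ ∀ j' ∈ Finset.range (width D), hval D T a j' ≤ hval D T a j)
      with hFdef
    set j0 := F.max' hF with hj0def
    have hmem : j0 ∈ F := F.max'_mem hF
    have hmax : ∀ b ∈ F, b ≤ j0 := fun b hb => F.le_max' b hb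
    rw [hFdef, Finset.mem_filter] at hmem
    obtain ⟨hj0r, hpos, hmaxh⟩ := hmem
    have hMh : hval D T a j0 = Mh D T a :=
      le_antisymm (hval_le_Mh hj0r) (Finset.sup'_le _ _ hmaxh)
    have hposM : 0 < Mh D T a := hMh ▸ hpos
    have hstrict : ∀ j ∈ Finset.range (width D), j0 < j → hval D T a j < Mh D T a := by
      intro j hjr hlt
      rcases lt_or_eq_of_le (hval_le_Mh (T := T) (a := a) hjr) with hc | hc
      · exact hc
      · exfalso
        have hjF : j ∈ F := by
          rw [hFdef, Finset.mem_filter]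
          refine ⟨hjr, by rw [hc]; exact hposM, fun j' hj' => ?_⟩
          rw [hc]
          exact hval_le_Mh hj'
        exact absurd (hmax j hjF) (not_le.mpr hlt)
    have hs := hval_succ D T a j0
    have h1 : hval D T a (j0 + 1) ≤ Mh D T a - 1 := by
      rcases lt_or_ge (j0 + 1) (width D) with hw | hw
      · have := hstrict (j0 + 1) (Finset.mem_range.mpr hw) (Nat.lt_succ_self _)
        omega
      · rw [hval_of_width_le hw]; omega
    have hcnt1 : cnt D T (a + 1) j0 ≤ 1 := cnt_le_one hT _ _
    have hA : cnt D T (a + 1) j0 = 1 := by omega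
    have hB : cnt D T a j0 = 0 := by omega
    have hnext : hval D T a (j0 + 1) = Mh D T a - 1 := by omega
    obtain ⟨c0, hc0eq⟩ := Finset.card_eq_one.mp hA
    have hc0mem : c0 ∈ D.filter (fun c => c.2 = j0 ∧ T c.1 c.2 = a + 1) := by
      rw [hc0eq]; exact Finset.mem_singleton_self c0
    rw [Finset.mem_filter] at hc0mem
    obtain ⟨hc0D, hc0col, hc0val⟩ := hc0mem
    have huniq : ∀ c ∈ D, c.2 = j0 → T c.1 c.2 = a + 1 → c = c0 := by
      intro c hcD hcc hcv
      have : c ∈ D.filter (fun c => c.2 = j0 ∧ T c.1 c.2 = a + 1) :=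
        Finset.mem_filter.mpr ⟨hcD, hcc, hcv⟩
      rw [hc0eq, Finset.mem_singleton] at this
      exact this
    have hnoa : ∀ c ∈ D, c.2 = j0 → T c.1 c.2 ≠ a := by
      intro c hcD hcc hcv
      have : c ∈ D.filter (fun c => c.2 = j0 ∧ T c.1 c.2 = a) :=
        Finset.mem_filter.mpr ⟨hcD, hcc, hcv⟩
      rw [Finset.card_eq_zero.mp hB] at this
      exact absurd this (Finset.notMem_empty c)
    have hv' : T' c0.1 c0.2 = a := by
      rw [← h]
      show (if (c0.1, c0.2) ∈ D ∧ c0.2 = j0 ∧ T c0.1 c0.2 = a + 1 then a else T c0.1 c0.2) = a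
      rw [if_pos ⟨hc0D, hc0col, hc0val⟩]
    have hag : ∀ c : ℕ × ℕ, c ≠ c0 → T' c.1 c.2 = T c.1 c.2 := by
      intro c hc
      rw [← h]
      show (if (c.1, c.2) ∈ D ∧ c.2 = j0 ∧ T c.1 c.2 = a + 1 then a else T c.1 c.2) = T c.1 c.2
      rw [if_neg]
      rintro ⟨h1', h2', h3'⟩
      exact hc (huniq c h1' h2' h3')
    rw [← hc0col] at hMh hstrict hnext huniq hnoa
    exact ⟨c0, hc0D, hc0val, hv', hag, hnoa, huniq, hMh, hposM, hstrict, hnext⟩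

lemma fOp_anatomy {D : Shape} {T T' : Filling} {a : ℕ} (hT : SsytOn D T)
    (h : fOp D a T = some T') :
    ∃ c0 : ℕ × ℕ, c0 ∈ D ∧ T c0.1 c0.2 = a ∧ T' c0.1 c0.2 = a + 1 ∧
      (∀ c : ℕ × ℕ, c ≠ c0 → T' c.1 c.2 = T c.1 c.2) ∧
      (∀ c ∈ D, c.2 = c0.2 → T c.1 c.2 ≠ a + 1) ∧
      (∀ c ∈ D, c.2 = c0.2 → T c.1 c.2 = a → c = c0) ∧
      kval D T a c0.2 = Mk D T a ∧ 0 < Mk D T a ∧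
      (∀ j ∈ Finset.range (width D), j < c0.2 → kval D T a j < Mk D T a) ∧
      (∀ j, j + 1 = c0.2 → kval D T a j = Mk D T a - 1) ∧
      (c0.2 = 0 → Mk D T a = 1) := by
  simp only [fOp] at h
  split at h
  case isFalse => exact absurd h (by simp)
  case isTrue hF =>
    replace h := Option.some.inj h
    set F := (Finset.range (width D)).filter (fun j =>
      0 < kval D T a j ∧ ∀ j' ∈ Finset.range (width D), kval D T a j' ≤ kval D T a j)
      with hFdef
    set j0 := F.min' hF with hj0def
    have hmem : j0 ∈ F := F.min'_mem hF
    have hmin : ∀ b ∈ F, j0 ≤ b := fun b hb => F.min'_le b hb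
    rw [hFdef, Finset.mem_filter] at hmem
    obtain ⟨hj0r, hpos, hmaxk⟩ := hmem
    have hMk : kval D T a j0 = Mk D T a :=
      le_antisymm (kval_le_Mk hj0r) (Finset.sup'_le _ _ hmaxk)
    have hposM : 0 < Mk D T a := hMk ▸ hpos
    have hstrict : ∀ j ∈ Finset.range (width D), j < j0 → kval D T a j < Mk D T a := by
      intro j hjr hlt
      rcases lt_or_eq_of_le (kval_le_Mk (T := T) (a := a) hjr) with hc | hc
      · exact hc
      · exfalso
        have hjF : j ∈ F := by
          rw [hFdef, Finset.mem_filter]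
          refine ⟨hjr, by rw [hc]; exact hposM, fun j' hj' => ?_⟩
          rw [hc]
          exact kval_le_Mk hj'
        exact absurd (hmin j hjF) (not_le.mpr hlt)
    have hcnt1 : cnt D T a j0 ≤ 1 := cnt_le_one hT _ _
    have key : cnt D T a j0 = 1 ∧ cnt D T (a + 1) j0 = 0 ∧
        (∀ j, j + 1 = j0 → kval D T a j = Mk D T a - 1) ∧ (j0 = 0 → Mk D T a = 1) := by
      rcases Nat.eq_zero_or_eq_succ_pred j0 with h0 | hsucc
      · have hz := kval_zero D T a
        rw [h0] at hMk hcnt1 ⊢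
        refine ⟨by omega, by omega, fun j hj => by omega, fun _ => by omega⟩
      · set jp := j0 - 1 with hjp
        have hjj : jp + 1 = j0 := by omega
        have hks := kval_succ D T a jp
        rw [hjj] at hks
        have hlt : kval D T a jp ≤ Mk D T a - 1 := by
          have : jp < width D := by
            have := Finset.mem_range.mp hj0r
            omega
          have := hstrict jp (Finset.mem_range.mpr this) (by omega)
          omega
        refine ⟨by omega, by omega, fun j hj => ?_, fun h0 => by omega⟩
        have : j = jp := by omega
        rw [this]
        omega
    obtain ⟨hA, hB, hprev, hzero⟩ := key
    obtain ⟨c0, hc0eq⟩ := Finset.card_eq_one.mp hA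
    have hc0mem : c0 ∈ D.filter (fun c => c.2 = j0 ∧ T c.1 c.2 = a) := by
      rw [hc0eq]; exact Finset.mem_singleton_self c0
    rw [Finset.mem_filter] at hc0mem
    obtain ⟨hc0D, hc0col, hc0val⟩ := hc0mem
    have huniq : ∀ c ∈ D, c.2 = j0 → T c.1 c.2 = a → c = c0 := by
      intro c hcD hcc hcv
      have : c ∈ D.filter (fun c => c.2 = j0 ∧ T c.1 c.2 = a) :=
        Finset.mem_filter.mpr ⟨hcD, hcc, hcv⟩
      rw [hc0eq, Finset.mem_singleton] at this
      exact this
    have hnoa : ∀ c ∈ D, c.2 = j0 → T c.1 c.2 ≠ a + 1 := by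
      intro c hcD hcc hcv
      have : c ∈ D.filter (fun c => c.2 = j0 ∧ T c.1 c.2 = a + 1) :=
        Finset.mem_filter.mpr ⟨hcD, hcc, hcv⟩
      rw [Finset.card_eq_zero.mp hB] at this
      exact absurd this (Finset.notMem_empty c)
    have hv' : T' c0.1 c0.2 = a + 1 := by
      rw [← h]
      show (if (c0.1, c0.2) ∈ D ∧ c0.2 = j0 ∧ T c0.1 c0.2 = a then a + 1 else T c0.1 c0.2) = a + 1
      rw [if_pos ⟨hc0D, hc0col, hc0val⟩]
    have hag : ∀ c : ℕ × ℕ, c ≠ c0 → T' c.1 c.2 = T c.1 c.2 := by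
      intro c hc
      rw [← h]
      show (if (c.1, c.2) ∈ D ∧ c.2 = j0 ∧ T c.1 c.2 = a then a + 1 else T c.1 c.2) = T c.1 c.2
      rw [if_neg]
      rintro ⟨h1', h2', h3'⟩
      exact hc (huniq c h1' h2' h3')
    rw [← hc0col] at hMk hstrict hprev hzero huniq hnoa
    exact ⟨c0, hc0D, hc0val, hv', hag, hnoa, huniq, hMk, hposM, hstrict, hprev, hzero⟩

lemma cells_UL (κ : YoungDiagram) {i1 i2 j1 j2 : ℕ} (hi : i1 ≤ i2) (hj : j1 ≤ j2)
    (h : (i2, j2) ∈ κ.cells) : (i1, j1) ∈ κ.cells :=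
  (κ.mem_cells _).mpr (κ.up_left_mem hi hj ((κ.mem_cells _).mp h))

lemma cnt_pos_of_mem {D : Shape} {T : Filling} {v j : ℕ} {c : ℕ × ℕ} (hc : c ∈ D)
    (hcol : c.2 = j) (hv : T c.1 c.2 = v) : 1 ≤ cnt D T v j :=
  Finset.card_pos.mpr ⟨c, Finset.mem_filter.mpr ⟨hc, hcol, hv⟩⟩

lemma cnt_eq_zero {D : Shape} {T : Filling} {v j : ℕ}
    (h : ∀ c ∈ D, c.2 = j → T c.1 c.2 ≠ v) : cnt D T v j = 0 := by
  unfold cnt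
  rw [Finset.card_eq_zero, Finset.filter_eq_empty_iff]
  rintro c hc ⟨h1, h2⟩
  exact h c hc h1 h2

/-- Key contradiction for `e`-preservation: the cell directly left of `c0`
cannot also hold `a+1`. -/
lemma e_left_contradiction (κ : YoungDiagram) {T : Filling} {a : ℕ} (hT : SsytOn κ.cells T)
    {c0 : ℕ × ℕ} (hc0D : c0 ∈ κ.cells) (hvc0 : T c0.1 c0.2 = a + 1)
    (hnoa : ∀ c ∈ κ.cells, c.2 = c0.2 → T c.1 c.2 ≠ a)
    (hMh : hval κ.cells T a c0.2 = Mh κ.cells T a)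
    (hj : 1 ≤ c0.2) (hmid : T c0.1 (c0.2 - 1) = a + 1) : False := by
  set jm := c0.2 - 1 with hjm
  have hjm1 : jm + 1 = c0.2 := by omega
  have hc0D' : (c0.1, c0.2) ∈ κ.cells := hc0D
  have hmidD : (c0.1, jm) ∈ κ.cells := cells_UL κ (le_refl _) (by omega) hc0D'
  by_cases hcase : ∀ c ∈ κ.cells, c.2 = jm → T c.1 c.2 ≠ a
  · have hs := hval_succ κ.cells T a jm
    rw [hjm1] at hs
    have h1 : 1 ≤ cnt κ.cells T (a + 1) jm := cnt_pos_of_mem hmidD rfl hmid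
    have h2 : cnt κ.cells T a jm = 0 := cnt_eq_zero hcase
    have h3 : hval κ.cells T a jm ≤ Mh κ.cells T a :=
      hval_le_Mh (Finset.mem_range.mpr (by have := col_lt_width hc0D; omega))
    omega
  · push_neg at hcase
    obtain ⟨c', hc'D, hc'col, hc'val⟩ := hcase
    rw [hc'col] at hc'val
    have hc'D' : (c'.1, jm) ∈ κ.cells := by rw [← hc'col]; exact hc'D
    have hne : c'.1 ≠ c0.1 := by
      intro he
      rw [he] at hc'val
      omega
    have hlt : c'.1 < c0.1 := by
      rcases lt_or_gt_of_ne hne with h | h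
      · exact h
      · exfalso
        have := hT.2.1 c0.1 c'.1 jm h hmidD hc'D'
        omega
    have hup : (c'.1, c0.2) ∈ κ.cells := cells_UL κ (le_of_lt hlt) (le_refl _) hc0D'
    have hge : a ≤ T c'.1 c0.2 := by
      have h4 := hT.1 c'.1 jm c0.2 (by omega) hc'D' hup
      omega
    have hlt2 : T c'.1 c0.2 < T c0.1 c0.2 := hT.2.1 c'.1 c0.1 c0.2 hlt hup hc0D'
    exact hnoa (c'.1, c0.2) hup rfl (by show T c'.1 c0.2 = a; omega)

/-- Key contradiction for `f`-preservation: the cell directly right of `c0`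
cannot also hold `a`. -/
lemma f_right_contradiction (κ : YoungDiagram) {T : Filling} {a : ℕ} (hT : SsytOn κ.cells T)
    {c0 : ℕ × ℕ} (hc0D : c0 ∈ κ.cells) (hvc0 : T c0.1 c0.2 = a)
    (hnob : ∀ c ∈ κ.cells, c.2 = c0.2 → T c.1 c.2 ≠ a + 1)
    (hMk : kval κ.cells T a c0.2 = Mk κ.cells T a)
    (hmD : (c0.1, c0.2 + 1) ∈ κ.cells) (hmid : T c0.1 (c0.2 + 1) = a) : False := by
  set jp := c0.2 + 1 with hjp
  have hc0D' : (c0.1, c0.2) ∈ κ.cells := hc0D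
  by_cases hcase : ∀ c ∈ κ.cells, c.2 = jp → T c.1 c.2 ≠ a + 1
  · have hs := kval_succ κ.cells T a c0.2
    have h1 : 1 ≤ cnt κ.cells T a jp := cnt_pos_of_mem hmD rfl hmid
    have h2 : cnt κ.cells T (a + 1) jp = 0 := cnt_eq_zero hcase
    have h3 : kval κ.cells T a jp ≤ Mk κ.cells T a :=
      kval_le_Mk (Finset.mem_range.mpr (col_lt_width hmD))
    rw [← hjp] at hs
    omega
  · push_neg at hcase
    obtain ⟨c', hc'D, hc'col, hc'val⟩ := hcase
    rw [hc'col] at hc'val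
    have hc'D' : (c'.1, jp) ∈ κ.cells := by rw [← hc'col]; exact hc'D
    have hne : c'.1 ≠ c0.1 := by
      intro he
      rw [he] at hc'val
      omega
    have hlt : c0.1 < c'.1 := by
      rcases lt_or_gt_of_ne hne with h | h
      · exfalso
        have := hT.2.1 c'.1 c0.1 jp h hc'D' hmD
        omega
      · exact h
    have hleft : (c'.1, c0.2) ∈ κ.cells := cells_UL κ (le_refl _) (by omega) hc'D'
    have hle : T c'.1 c0.2 ≤ a + 1 := by
      have h4 := hT.1 c'.1 c0.2 jp (by omega) hleft hc'D'
      omega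
    have hgt : T c0.1 c0.2 < T c'.1 c0.2 := hT.2.1 c0.1 c'.1 c0.2 hlt hc0D' hleft
    exact hnob (c'.1, c0.2) hleft rfl (by show T c'.1 c0.2 = a + 1; omega)

lemma eOp_preserves (κ : YoungDiagram) {T T' : Filling} {a s : ℕ}
    (hT : SsytOn κ.cells T) (hE : EntriesLT κ.cells s T)
    (h : eOp κ.cells a T = some T') :
    SsytOn κ.cells T' ∧ EntriesLT κ.cells s T' := by
  obtain ⟨c0, hc0D, hvc0, hv', hag, hnoa, huniq, hMh, hposM, hstrict, hnext⟩ :=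
    eOp_anatomy hT h
  constructor
  · refine ⟨?_, ?_, ?_⟩
    · -- rows
      intro i j1 j2 hle hm1 hm2
      by_cases h1 : ((i, j1) : ℕ × ℕ) = c0
      · by_cases h2 : ((i, j2) : ℕ × ℕ) = c0
        · have : j1 = j2 := by
            have e1 := congrArg Prod.snd h1
            have e2 := congrArg Prod.snd h2
            simp only at e1 e2
            omega
          rw [this]
        · have hva : T' i j1 = a := by rw [show i = c0.1 from congrArg Prod.fst h1,
            show j1 = c0.2 from congrArg Prod.snd h1]; exact hv'
          have hvb : T' i j2 = T i j2 := hag (i, j2) h2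
          have hv1 : T i j1 = a + 1 := by rw [show i = c0.1 from congrArg Prod.fst h1,
            show j1 = c0.2 from congrArg Prod.snd h1]; exact hvc0
          have := hT.1 i j1 j2 hle hm1 hm2
          omega
      · by_cases h2 : ((i, j2) : ℕ × ℕ) = c0
        · -- the hard case
          have hi : i = c0.1 := congrArg Prod.fst h2
          have hj2 : j2 = c0.2 := congrArg Prod.snd h2
          have hva : T' i j2 = a := by rw [hi, hj2]; exact hv'
          have hvb : T' i j1 = T i j1 := hag (i, j1) h1
          have hub : T i j1 ≤ T i j2 := hT.1 i j1 j2 hle hm1 hm2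
          have hv2 : T i j2 = a + 1 := by rw [hi, hj2]; exact hvc0
          rcases Nat.lt_or_ge (T i j1) (a + 1) with hc | hc
      -- T i j1 ≤ a, done
          · omega
          · exfalso
            have heq : T i j1 = a + 1 := by omega
            have hj1lt : j1 < j2 := by
              rcases Nat.lt_or_ge j1 j2 with h' | h'
              · exact h'
              · exfalso
                have : j1 = j2 := by omega
                exact h1 (by rw [this]; exact h2)
            -- middle cell (i, c0.2 - 1)
            have hjpos : 1 ≤ c0.2 := by omega
            have hmD : (c0.1, c0.2 - 1) ∈ κ.cells :=
              cells_UL κ (le_refl c0.1) (Nat.sub_le _ _) (show (c0.1, c0.2) ∈ κ.cells from hc0D)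
            have hmid : T c0.1 (c0.2 - 1) = a + 1 := by
              have hu1 : T i j1 ≤ T i (c0.2 - 1) :=
                hT.1 i j1 (c0.2 - 1) (by omega) hm1 (by rw [hi]; exact hmD)
              have hu2 : T i (c0.2 - 1) ≤ T i j2 :=
                hT.1 i (c0.2 - 1) j2 (by omega) (by rw [hi]; exact hmD) hm2
              rw [← hi]
              omega
            exact e_left_contradiction κ hT hc0D hvc0 hnoa hMh hjpos hmid
        · rw [hag (i, j1) h1, hag (i, j2) h2]
          exact hT.1 i j1 j2 hle hm1 hm2
    · -- columns
      intro i1 i2 j hlt hm1 hm2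
      by_cases h1 : ((i1, j) : ℕ × ℕ) = c0
      · have hva : T' i1 j = a := by rw [show i1 = c0.1 from congrArg Prod.fst h1,
          show j = c0.2 from congrArg Prod.snd h1]; exact hv'
        have h2 : ((i2, j) : ℕ × ℕ) ≠ c0 := by
          intro he
          have := congrArg Prod.fst h1
          have := congrArg Prod.fst he
          simp only at *
          omega
        have hvb : T' i2 j = T i2 j := hag (i2, j) h2
        have hv1 : T i1 j = a + 1 := by rw [show i1 = c0.1 from congrArg Prod.fst h1,
          show j = c0.2 from congrArg Prod.snd h1]; exact hvc0
        have := hT.2.1 i1 i2 j hlt hm1 hm2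
        omega
      · by_cases h2 : ((i2, j) : ℕ × ℕ) = c0
        · have hva : T' i2 j = a := by rw [show i2 = c0.1 from congrArg Prod.fst h2,
            show j = c0.2 from congrArg Prod.snd h2]; exact hv'
          have hvb : T' i1 j = T i1 j := hag (i1, j) h1
          have hv2 : T i2 j = a + 1 := by rw [show i2 = c0.1 from congrArg Prod.fst h2,
            show j = c0.2 from congrArg Prod.snd h2]; exact hvc0
          have hlt2 := hT.2.1 i1 i2 j hlt hm1 hm2
          have hne : T i1 j ≠ a := hnoa (i1, j) hm1 (show j = c0.2 from congrArg Prod.snd h2)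
          omega
        · rw [hag (i1, j) h1, hag (i2, j) h2]
          exact hT.2.1 i1 i2 j hlt hm1 hm2
    · -- zero outside
      intro i j hm
      have : ((i, j) : ℕ × ℕ) ≠ c0 := by
        intro he
        rw [he] at hm
        exact hm hc0D
      rw [hag (i, j) this]
      exact hT.2.2 i j hm
  · -- entries
    intro c hc
    by_cases h1 : c = c0
    · rw [h1, hv']
      have := hE c0 hc0D
      omega
    · rw [hag c h1]
      exact hE c hc

lemma fOp_preserves (κ : YoungDiagram) {T T' : Filling} {a s : ℕ} (ha : a + 1 < s)
    (hT : SsytOn κ.cells T) (hE : EntriesLT κ.cells s T)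
    (h : fOp κ.cells a T = some T') :
    SsytOn κ.cells T' ∧ EntriesLT κ.cells s T' := by
  obtain ⟨c0, hc0D, hvc0, hv', hag, hnob, huniq, hMk, hposM, hstrict, hprev, hzero⟩ :=
    fOp_anatomy hT h
  constructor
  · refine ⟨?_, ?_, ?_⟩
    · -- rows
      intro i j1 j2 hle hm1 hm2
      by_cases h1 : ((i, j1) : ℕ × ℕ) = c0
      · by_cases h2 : ((i, j2) : ℕ × ℕ) = c0
        · have : j1 = j2 := by
            have e1 := congrArg Prod.snd h1
            have e2 := congrArg Prod.snd h2
            simp only at e1 e2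
            omega
          rw [this]
        · -- hard case: cell right of c0
          have hi : i = c0.1 := congrArg Prod.fst h1
          have hj1 : j1 = c0.2 := congrArg Prod.snd h1
          have hva : T' i j1 = a + 1 := by rw [hi, hj1]; exact hv'
          have hvb : T' i j2 = T i j2 := hag (i, j2) h2
          have hv1 : T i j1 = a := by rw [hi, hj1]; exact hvc0
          have hub : T i j1 ≤ T i j2 := hT.1 i j1 j2 hle hm1 hm2
          rcases Nat.lt_or_ge a (T i j2) with hc | hc
          · omega
          · exfalso
            have heq : T i j2 = a := by omega
            have hj1lt : j1 < j2 := by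
              rcases Nat.lt_or_ge j1 j2 with h' | h'
              · exact h'
              · exfalso
                have : j1 = j2 := by omega
                exact h2 (by rw [← this]; exact h1)
            have hmD : (c0.1, c0.2 + 1) ∈ κ.cells :=
              cells_UL κ (le_refl c0.1) (show c0.2 + 1 ≤ j2 by omega)
                (show (c0.1, j2) ∈ κ.cells by rw [← hi]; exact hm2)
            have hmid : T c0.1 (c0.2 + 1) = a := by
              have hu1 : T i j1 ≤ T i (c0.2 + 1) :=
                hT.1 i j1 (c0.2 + 1) (by omega) hm1 (by rw [hi]; exact hmD)
              have hu2 : T i (c0.2 + 1) ≤ T i j2 :=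
                hT.1 i (c0.2 + 1) j2 (by omega) (by rw [hi]; exact hmD) hm2
              rw [← hi]
              omega
            exact f_right_contradiction κ hT hc0D hvc0 hnob hMk hmD hmid
      · by_cases h2 : ((i, j2) : ℕ × ℕ) = c0
        · have hva : T' i j2 = a + 1 := by rw [show i = c0.1 from congrArg Prod.fst h2,
            show j2 = c0.2 from congrArg Prod.snd h2]; exact hv'
          have hvb : T' i j1 = T i j1 := hag (i, j1) h1
          have hv2 : T i j2 = a := by rw [show i = c0.1 from congrArg Prod.fst h2,
            show j2 = c0.2 from congrArg Prod.snd h2]; exact hvc0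
          have := hT.1 i j1 j2 hle hm1 hm2
          omega
        · rw [hag (i, j1) h1, hag (i, j2) h2]
          exact hT.1 i j1 j2 hle hm1 hm2
    · -- columns
      intro i1 i2 j hlt hm1 hm2
      by_cases h1 : ((i1, j) : ℕ × ℕ) = c0
      · have hva : T' i1 j = a + 1 := by rw [show i1 = c0.1 from congrArg Prod.fst h1,
          show j = c0.2 from congrArg Prod.snd h1]; exact hv'
        have h2 : ((i2, j) : ℕ × ℕ) ≠ c0 := by
          intro he
          have e1 := congrArg Prod.fst h1
          have e2 := congrArg Prod.fst he
          simp only at e1 e2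
          omega
        have hvb : T' i2 j = T i2 j := hag (i2, j) h2
        have hv1 : T i1 j = a := by rw [show i1 = c0.1 from congrArg Prod.fst h1,
          show j = c0.2 from congrArg Prod.snd h1]; exact hvc0
        have hlt2 := hT.2.1 i1 i2 j hlt hm1 hm2
        have hne : T i2 j ≠ a + 1 := hnob (i2, j) hm2 (show j = c0.2 from congrArg Prod.snd h1)
        omega
      · by_cases h2 : ((i2, j) : ℕ × ℕ) = c0
        · have hva : T' i2 j = a + 1 := by rw [show i2 = c0.1 from congrArg Prod.fst h2,
            show j = c0.2 from congrArg Prod.snd h2]; exact hv'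
          have hvb : T' i1 j = T i1 j := hag (i1, j) h1
          have hv2 : T i2 j = a := by rw [show i2 = c0.1 from congrArg Prod.fst h2,
            show j = c0.2 from congrArg Prod.snd h2]; exact hvc0
          have := hT.2.1 i1 i2 j hlt hm1 hm2
          omega
        · rw [hag (i1, j) h1, hag (i2, j) h2]
          exact hT.2.1 i1 i2 j hlt hm1 hm2
    · intro i j hm
      have : ((i, j) : ℕ × ℕ) ≠ c0 := by
        intro he
        rw [he] at hm
        exact hm hc0D
      rw [hag (i, j) this]
      exact hT.2.2 i j hm
  · intro c hc
    by_cases h1 : c = c0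
    · rw [h1, hv']
      exact ha
    · rw [hag c h1]
      exact hE c hc

lemma eOp_eq_none_iff {D : Shape} {T : Filling} {a : ℕ} :
    eOp D a T = none ↔ Mh D T a ≤ 0 := by
  constructor
  · intro h
    by_contra hM
    push_neg at hM
    obtain ⟨j, hjr, hj⟩ := Finset.exists_mem_eq_sup' (range_width_nonempty D) (hval D T a)
    have hFne : ((Finset.range (width D)).filter (fun j =>
        0 < hval D T a j ∧ ∀ j' ∈ Finset.range (width D),
          hval D T a j' ≤ hval D T a j)).Nonempty := by
      refine ⟨j, Finset.mem_filter.mpr ⟨hjr, ?_, ?_⟩⟩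
      · rw [← hj]; exact hM
      · intro j' hj'
        rw [← hj]
        exact hval_le_Mh hj'
    simp only [eOp] at h
    rw [dif_pos hFne] at h
    exact Option.some_ne_none _ h
  · intro hM
    have hFe : ((Finset.range (width D)).filter (fun j =>
        0 < hval D T a j ∧ ∀ j' ∈ Finset.range (width D),
          hval D T a j' ≤ hval D T a j)).Nonempty → False := by
      rintro ⟨j, hj⟩
      rw [Finset.mem_filter] at hj
      have := hval_le_Mh (T := T) (a := a) hj.1
      have := hj.2.1
      omega
    simp only [eOp]
    rw [dif_neg hFe]

lemma fOp_eq_none_iff {D : Shape} {T : Filling} {a : ℕ} :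
    fOp D a T = none ↔ Mk D T a ≤ 0 := by
  constructor
  · intro h
    by_contra hM
    push_neg at hM
    obtain ⟨j, hjr, hj⟩ := Finset.exists_mem_eq_sup' (range_width_nonempty D) (kval D T a)
    have hFne : ((Finset.range (width D)).filter (fun j =>
        0 < kval D T a j ∧ ∀ j' ∈ Finset.range (width D),
          kval D T a j' ≤ kval D T a j)).Nonempty := by
      refine ⟨j, Finset.mem_filter.mpr ⟨hjr, ?_, ?_⟩⟩
      · rw [← hj]; exact hM
      · intro j' hj'
        rw [← hj]
        exact kval_le_Mk hj'
    simp only [fOp] at h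
    rw [dif_pos hFne] at h
    exact Option.some_ne_none _ h
  · intro hM
    have hFe : ((Finset.range (width D)).filter (fun j =>
        0 < kval D T a j ∧ ∀ j' ∈ Finset.range (width D),
          kval D T a j' ≤ kval D T a j)).Nonempty → False := by
      rintro ⟨j, hj⟩
      rw [Finset.mem_filter] at hj
      have := kval_le_Mk (T := T) (a := a) hj.1
      have := hj.2.1
      omega
    simp only [fOp]
    rw [dif_neg hFe]

lemma maxZ_after_e {D : Shape} {T T' : Filling} {a : ℕ} (hT : SsytOn D T)
    (h : eOp D a T = some T') :
    max 0 (Mh D T' a) = max 0 (Mh D T a) - 1 := by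
  obtain ⟨c0, hc0D, hvc0, hv', hag, hnoa, huniq, hMh, hposM, hstrict, hnext⟩ :=
    eOp_anatomy hT h
  have hupd := hval_update hc0D hag hvc0 hv'
  have hub : ∀ j ∈ Finset.range (width D), hval D T' a j ≤ Mh D T a - 1 := by
    intro j hjr
    rw [hupd j]
    by_cases hle : j ≤ c0.2
    · rw [if_pos hle]
      have := hval_le_Mh (T := T) (a := a) hjr
      omega
    · rw [if_neg hle]
      have := hstrict j hjr (by omega)
      omega
  have hMh'le : Mh D T' a ≤ Mh D T a - 1 := Finset.sup'_le _ _ hub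
  rcases lt_or_ge (c0.2 + 1) (width D) with hw | hw
  · -- the max is achieved
    have hach : hval D T' a (c0.2 + 1) = Mh D T a - 1 := by
      rw [hupd (c0.2 + 1), if_neg (by omega), hnext]
      ring
    have : Mh D T a - 1 ≤ Mh D T' a := by
      rw [← hach]
      exact hval_le_Mh (Finset.mem_range.mpr hw)
    omega
  · -- c0.2 + 1 = width: Mh = 1
    have h0 : hval D T a (c0.2 + 1) = 0 := hval_of_width_le hw
    have hM1 : Mh D T a = 1 := by omega
    have : Mh D T' a ≤ 0 := by omega
    omega

lemma maxZ_after_f {D : Shape} {T T' : Filling} {a : ℕ} (hT : SsytOn D T)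
    (h : fOp D a T = some T') :
    max 0 (Mk D T' a) = max 0 (Mk D T a) - 1 := by
  obtain ⟨c0, hc0D, hvc0, hv', hag, hnob, huniq, hMk, hposM, hstrict, hprev, hzero⟩ :=
    fOp_anatomy hT h
  have hupd := kval_update_f hc0D hag hvc0 hv'
  have hub : ∀ j ∈ Finset.range (width D), kval D T' a j ≤ Mk D T a - 1 := by
    intro j hjr
    rw [hupd j]
    by_cases hle : c0.2 ≤ j
    · rw [if_pos hle]
      have := kval_le_Mk (T := T) (a := a) hjr
      omega
    · rw [if_neg hle]
      have := hstrict j hjr (by omega)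
      omega
  have hMk'le : Mk D T' a ≤ Mk D T a - 1 := Finset.sup'_le _ _ hub
  rcases Nat.eq_zero_or_pos c0.2 with h0 | h0
  · have hM1 : Mk D T a = 1 := hzero h0
    have : Mk D T' a ≤ 0 := by omega
    omega
  · have hach : kval D T' a (c0.2 - 1) = Mk D T a - 1 := by
      rw [hupd (c0.2 - 1), if_neg (by omega), hprev (c0.2 - 1) (by omega)]
      ring
    have hr : c0.2 - 1 ∈ Finset.range (width D) := by
      have := col_lt_width hc0D
      rw [Finset.mem_range]
      omega
    have : Mk D T a - 1 ≤ Mk D T' a := by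
      rw [← hach]
      exact kval_le_Mk hr
    omega

lemma opIter_e_iff (κ : YoungDiagram) (a s : ℕ) :
    ∀ (l : ℕ) (T : Filling), SsytOn κ.cells T → EntriesLT κ.cells s T →
      (opIter (eOp κ.cells a) l T ≠ none ↔ (l : ℤ) ≤ max 0 (Mh κ.cells T a)) := by
  intro l
  induction l with
  | zero =>
    intro T _ _
    simp only [opIter]
    constructor
    · intro _
      exact_mod_cast le_max_left 0 _
    · intro _
      exact Option.some_ne_none T
  | succ l IH =>
    intro T hT hE
    simp only [opIter]
    rcases he : eOp κ.cells a T with _ | T'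
    · rw [eOp_eq_none_iff] at he
      simp only [Option.bind_none, ne_eq, not_true_eq_false, false_iff, not_le]
      push_cast
      omega
    · simp only [Option.bind_some]
      obtain ⟨hT', hE'⟩ := eOp_preserves κ hT hE he
      rw [IH T' hT' hE', maxZ_after_e hT he]
      push_cast
      omega

lemma opIter_f_iff (κ : YoungDiagram) (a s : ℕ) (ha : a + 1 < s) :
    ∀ (l : ℕ) (T : Filling), SsytOn κ.cells T → EntriesLT κ.cells s T →
      (opIter (fOp κ.cells a) l T ≠ none ↔ (l : ℤ) ≤ max 0 (Mk κ.cells T a)) := by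
  intro l
  induction l with
  | zero =>
    intro T _ _
    simp only [opIter]
    constructor
    · intro _
      exact_mod_cast le_max_left 0 _
    · intro _
      exact Option.some_ne_none T
  | succ l IH =>
    intro T hT hE
    simp only [opIter]
    rcases he : fOp κ.cells a T with _ | T'
    · rw [fOp_eq_none_iff] at he
      simp only [Option.bind_none, ne_eq, not_true_eq_false, false_iff, not_le]
      push_cast
      omega
    · simp only [Option.bind_some]
      obtain ⟨hT', hE'⟩ := fOp_preserves κ ha hT hE he
      rw [IH T' hT' hE', maxZ_after_f hT he]
      push_cast
      omega

lemma epsNum_eq (κ : YoungDiagram) {a s : ℕ} {T : Filling}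
    (hT : SsytOn κ.cells T) (hE : EntriesLT κ.cells s T) :
    (epsNum κ.cells a T : ℤ) = max 0 (Mh κ.cells T a) := by
  unfold epsNum
  have hset : {l : ℕ | opIter (eOp κ.cells a) l T ≠ none}
      = Set.Iic (max 0 (Mh κ.cells T a)).toNat := by
    ext l
    rw [Set.mem_setOf_eq, Set.mem_Iic, opIter_e_iff κ a s l T hT hE,
      Int.le_toNat (le_max_left 0 _)]
  rw [hset, csSup_Iic, Int.toNat_of_nonneg (le_max_left 0 _)]

lemma phiNum_eq (κ : YoungDiagram) {a s : ℕ} (ha : a + 1 < s) {T : Filling}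
    (hT : SsytOn κ.cells T) (hE : EntriesLT κ.cells s T) :
    (phiNum κ.cells a T : ℤ) = max 0 (Mk κ.cells T a) := by
  unfold phiNum
  have hset : {l : ℕ | opIter (fOp κ.cells a) l T ≠ none}
      = Set.Iic (max 0 (Mk κ.cells T a)).toNat := by
    ext l
    rw [Set.mem_setOf_eq, Set.mem_Iic, opIter_f_iff κ a s ha l T hT hE,
      Int.le_toNat (le_max_left 0 _)]
  rw [hset, csSup_Iic, Int.toNat_of_nonneg (le_max_left 0 _)]

lemma phi_sub_eps (κ : YoungDiagram) {a s : ℕ} (ha : a + 1 < s) {T : Filling}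
    (hT : SsytOn κ.cells T) (hE : EntriesLT κ.cells s T) :
    (phiNum κ.cells a T : ℤ) - (epsNum κ.cells a T : ℤ)
      = (content κ.cells T a : ℤ) - (content κ.cells T (a + 1) : ℤ) := by
  rw [phiNum_eq κ ha hT hE, epsNum_eq κ (s := s) hT hE]
  set D := κ.cells with hD
  set h0 := hval D T a 0 with hh0
  set N := (Finset.range (width D)).sup' (range_width_nonempty D)
    (fun j => hval D T a (j + 1)) with hN
  have hcont : h0 = (content D T (a + 1) : ℤ) - (content D T a : ℤ) := content_hval D T a
  have hw1 : 0 < width D := width_pos D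
  have hMkN : Mk D T a = N - h0 := by
    apply le_antisymm
    · apply Finset.sup'_le
      intro j hj
      rw [kval_eq]
      have : hval D T a (j + 1) ≤ N := Finset.le_sup' (fun j => hval D T a (j + 1)) hj
      omega
    · have : ∀ j ∈ Finset.range (width D), hval D T a (j + 1) - h0 ≤ Mk D T a := by
        intro j hj
        rw [← kval_eq]
        exact kval_le_Mk hj
      have h2 : N - h0 ≤ Mk D T a + h0 - h0 := by
        have : N ≤ Mk D T a + h0 := by
          apply Finset.sup'_le
          intro j hj
          have := this j hj
          omega
        omega
      omega
  have hN0 : 0 ≤ N := by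
    have hmem : width D - 1 ∈ Finset.range (width D) := Finset.mem_range.mpr (by omega)
    have := Finset.le_sup' (fun j => hval D T a (j + 1)) hmem
    have hz : hval D T a (width D - 1 + 1) = 0 := hval_of_width_le (by omega)
    omega
  have h0M : h0 ≤ Mh D T a := hval_le_Mh (Finset.mem_range.mpr hw1)
  have hNM : N ≤ max 0 (Mh D T a) := by
    apply Finset.sup'_le
    intro j hj
    rcases lt_or_ge (j + 1) (width D) with hc | hc
    · have := hval_le_Mh (T := T) (a := a) (Finset.mem_range.mpr hc)
      omega
    · rw [hval_of_width_le hc]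
      exact le_max_left _ _
  have hMN : Mh D T a ≤ max h0 N := by
    apply Finset.sup'_le
    intro j hj
    rcases Nat.eq_zero_or_pos j with h | h
    · rw [h]
      exact le_max_left _ _
    · have hmem : j - 1 ∈ Finset.range (width D) := by
        rw [Finset.mem_range] at hj ⊢
        omega
      have := Finset.le_sup' (fun j => hval D T a (j + 1)) hmem
      rw [show j - 1 + 1 = j by omega] at this
      omega
  have h0N : h0 ≤ N + 1 := by
    have hs := hval_succ D T a 0
    have h1 : cnt D T (a + 1) 0 ≤ 1 := cnt_le_one hT _ _
    have h2 : hval D T a (0 + 1) ≤ N :=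
      Finset.le_sup' (fun j => hval D T a (j + 1)) (Finset.mem_range.mpr hw1)
    omega
  rw [hMkN, hcont]
  omega

lemma eOp_content {D : Shape} {T T' : Filling} {a : ℕ} (hT : SsytOn D T)
    (h : eOp D a T = some T') :
    content D T' a = content D T a + 1 ∧
    content D T (a + 1) = content D T' (a + 1) + 1 ∧
    ∀ b, b ≠ a → b ≠ a + 1 → content D T' b = content D T b := by
  obtain ⟨c0, hc0D, hvc0, hv', hag, _, _, _, _, _, _⟩ := eOp_anatomy hT h
  have hne : T c0.1 c0.2 ≠ T' c0.1 c0.2 := by rw [hvc0, hv']; omega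
  obtain ⟨h1, h2, h3⟩ := content_update hc0D hag hne
  rw [hv'] at h1
  rw [hvc0] at h2
  refine ⟨h1, h2, fun b hb hb' => h3 b (by rw [hvc0]; exact hb') (by rw [hv']; exact hb)⟩

lemma fOp_content {D : Shape} {T T' : Filling} {a : ℕ} (hT : SsytOn D T)
    (h : fOp D a T = some T') :
    content D T a = content D T' a + 1 ∧
    content D T' (a + 1) = content D T (a + 1) + 1 ∧
    ∀ b, b ≠ a → b ≠ a + 1 → content D T' b = content D T b := by
  obtain ⟨c0, hc0D, hvc0, hv', hag, _, _, _, _, _, _, _⟩ := fOp_anatomy hT h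
  have hne : T c0.1 c0.2 ≠ T' c0.1 c0.2 := by rw [hvc0, hv']; omega
  obtain ⟨h1, h2, h3⟩ := content_update hc0D hag hne
  rw [hv'] at h1
  rw [hvc0] at h2
  refine ⟨h2, h1, fun b hb hb' => h3 b (by rw [hvc0]; exact hb) (by rw [hv']; exact hb')⟩

lemma e_then_f {D : Shape} {T T' : Filling} {a : ℕ} (hT : SsytOn D T)
    (h : eOp D a T = some T') : fOp D a T' = some T := by
  obtain ⟨c0, hc0D, hvc0, hv', hag, hnoa, huniq, hMh, hposM, hstrict, hnext⟩ :=
    eOp_anatomy hT h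
  have hupd := kval_update_e hc0D hag hvc0 hv'
  have hjr : c0.2 ∈ Finset.range (width D) := Finset.mem_range.mpr (col_lt_width hc0D)
  have h00 : hval D T a 0 ≤ Mh D T a := hval_le_Mh (Finset.mem_range.mpr (width_pos D))
  have k0 : kval D T' a c0.2 = Mh D T a + 1 - hval D T a 0 := by
    rw [hupd c0.2, if_pos (le_refl _), kval_eq, hnext]
    ring
  have hposk : 0 < kval D T' a c0.2 := by omega
  have hmax : ∀ j ∈ Finset.range (width D), kval D T' a j ≤ kval D T' a c0.2 := by
    intro j hjr'
    rw [hupd j, kval_eq]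
    by_cases hle : c0.2 ≤ j
    · rw [if_pos hle]
      have hj1 : hval D T a (j + 1) ≤ Mh D T a - 1 := by
        rcases lt_or_ge (j + 1) (width D) with hc | hc
        · have := hstrict (j + 1) (Finset.mem_range.mpr hc) (by omega)
          omega
        · rw [hval_of_width_le hc]
          omega
      omega
    · rw [if_neg hle]
      have hj1 : hval D T a (j + 1) ≤ Mh D T a := by
        rcases lt_or_ge (j + 1) (width D) with hc | hc
        · exact hval_le_Mh (Finset.mem_range.mpr hc)
        · rw [hval_of_width_le hc]
          omega
      omega
  simp only [fOp]
  set Fs := (Finset.range (width D)).filter (fun j =>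
    0 < kval D T' a j ∧ ∀ j' ∈ Finset.range (width D),
      kval D T' a j' ≤ kval D T' a j) with hFs
  have hmem : c0.2 ∈ Fs := Finset.mem_filter.mpr ⟨hjr, hposk, hmax⟩
  have hF : Fs.Nonempty := ⟨c0.2, hmem⟩
  rw [dif_pos hF]
  have hminle : ∀ j ∈ Fs, c0.2 ≤ j := by
    intro j hj
    rw [hFs, Finset.mem_filter] at hj
    obtain ⟨hjr', hjpos, hjmax⟩ := hj
    by_contra hlt
    push_neg at hlt
    have h1 : kval D T' a j = hval D T a (j + 1) - hval D T a 0 := by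
      rw [hupd j, if_neg (by omega), kval_eq]
      ring
    have h2 : hval D T a (j + 1) ≤ Mh D T a := by
      have : j + 1 < width D := by
        have := Finset.mem_range.mp hjr
        omega
      exact hval_le_Mh (Finset.mem_range.mpr this)
    have h3 := hjmax c0.2 hjr
    omega
  have hmin : Fs.min' hF = c0.2 :=
    le_antisymm (Finset.min'_le Fs c0.2 hmem) (Finset.le_min' Fs hF c0.2 hminle)
  rw [Option.some.injEq]
  funext i j
  rw [hmin]
  by_cases hc : ((i, j) : ℕ × ℕ) = c0
  · have hi : i = c0.1 := congrArg Prod.fst hc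
    have hj : j = c0.2 := congrArg Prod.snd hc
    rw [if_pos ⟨by rw [hc]; exact hc0D, hj, by rw [hi, hj]; exact hv'⟩, hi, hj, hvc0]
  · rw [if_neg, hag (i, j) hc]
    rintro ⟨hD', hcol, hval'⟩
    rw [hag (i, j) hc] at hval'
    exact hnoa (i, j) hD' hcol hval'

lemma f_then_e {D : Shape} {T T' : Filling} {a : ℕ} (hT : SsytOn D T)
    (h : fOp D a T = some T') : eOp D a T' = some T := by
  obtain ⟨c0, hc0D, hvc0, hv', hag, hnob, huniq, hMk, hposM, hstrict, hprev, hzero⟩ :=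
    fOp_anatomy hT h
  have hupd := hval_update_f hc0D hag hvc0 hv'
  have hjr : c0.2 ∈ Finset.range (width D) := Finset.mem_range.mpr (col_lt_width hc0D)
  set h0 := hval D T a 0 with hh0
  -- -h0 ≤ Mk
  have hmh0 : -h0 ≤ Mk D T a := by
    have h1 : kval D T a (width D - 1) ≤ Mk D T a :=
      kval_le_Mk (Finset.mem_range.mpr (by have := width_pos D; omega))
    have h2 : kval D T a (width D - 1) = hval D T a (width D - 1 + 1) - h0 := kval_eq D T a _
    have h3 : hval D T a (width D - 1 + 1) = 0 := hval_of_width_le (by have := width_pos D; omega)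
    omega
  -- cnt values at column c0.2 for T
  have hcntb : cnt D T (a + 1) c0.2 = 0 := cnt_eq_zero hnob
  have hcnta : cnt D T a c0.2 = 1 := by
    apply le_antisymm (cnt_le_one hT _ _)
    exact cnt_pos_of_mem hc0D rfl hvc0
  have hs := hval_succ D T a c0.2
  have hkv : kval D T a c0.2 = hval D T a (c0.2 + 1) - h0 := kval_eq D T a _
  -- hval T c0.2 = Mk + h0 - 1 ; hval T' c0.2 = Mk + h0 + 1
  have hval0 : hval D T a c0.2 = Mk D T a + h0 - 1 := by
    rw [hs, hcnta, hcntb]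
    omega
  have hval0' : hval D T' a c0.2 = Mk D T a + h0 + 1 := by
    rw [hupd c0.2, if_pos (le_refl _), hval0]
    ring
  have hposh : 0 < hval D T' a c0.2 := by omega
  have hmax : ∀ j ∈ Finset.range (width D), hval D T' a j ≤ hval D T' a c0.2 := by
    intro j hjr'
    rw [hval0', hupd j]
    by_cases hle : j ≤ c0.2
    · rw [if_pos hle]
      rcases Nat.eq_zero_or_pos j with h0j | h0j
      · rw [h0j]
        omega
      · have hj1 : kval D T a (j - 1) ≤ Mk D T a - 1 := by
          have hr : j - 1 ∈ Finset.range (width D) := by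
            rw [Finset.mem_range] at hjr' ⊢
            omega
          have := hstrict (j - 1) hr (by omega)
          omega
        have hj2 : hval D T a j = kval D T a (j - 1) + h0 := by
          have := kval_eq D T a (j - 1)
          rw [show j - 1 + 1 = j by omega] at this
          omega
        omega
    · rw [if_neg hle]
      have hj1 : kval D T a (j - 1) ≤ Mk D T a := by
        have hr : j - 1 ∈ Finset.range (width D) := by
          rw [Finset.mem_range] at hjr' ⊢
          omega
        exact kval_le_Mk hr
      have hj2 : hval D T a j = kval D T a (j - 1) + h0 := by
        have := kval_eq D T a (j - 1)
        rw [show j - 1 + 1 = j by omega] at this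
        omega
      omega
  simp only [eOp]
  set Fs := (Finset.range (width D)).filter (fun j =>
    0 < hval D T' a j ∧ ∀ j' ∈ Finset.range (width D),
      hval D T' a j' ≤ hval D T' a j) with hFs
  have hmem : c0.2 ∈ Fs := Finset.mem_filter.mpr ⟨hjr, hposh, hmax⟩
  have hF : Fs.Nonempty := ⟨c0.2, hmem⟩
  rw [dif_pos hF]
  have hmaxle : ∀ j ∈ Fs, j ≤ c0.2 := by
    intro j hj
    rw [hFs, Finset.mem_filter] at hj
    obtain ⟨hjr', hjpos, hjmax⟩ := hj
    by_contra hlt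
    push_neg at hlt
    have h1 : hval D T' a j = kval D T a (j - 1) + h0 := by
      rw [hupd j, if_neg (by omega)]
      have := kval_eq D T a (j - 1)
      rw [show j - 1 + 1 = j by omega] at this
      omega
    have h2 : kval D T a (j - 1) ≤ Mk D T a := by
      have hr : j - 1 ∈ Finset.range (width D) := by
        rw [Finset.mem_range] at hjr' ⊢
        omega
      exact kval_le_Mk hr
    have h3 := hjmax c0.2 hjr
    omega
  have hmaxeq : Fs.max' hF = c0.2 :=
    le_antisymm (Finset.max'_le Fs hF c0.2 hmaxle) (Finset.le_max' Fs c0.2 hmem)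
  rw [Option.some.injEq]
  funext i j
  rw [hmaxeq]
  by_cases hc : ((i, j) : ℕ × ℕ) = c0
  · have hi : i = c0.1 := congrArg Prod.fst hc
    have hj : j = c0.2 := congrArg Prod.snd hc
    rw [if_pos ⟨by rw [hc]; exact hc0D, hj, by rw [hi, hj]; exact hv'⟩, hi, hj, hvc0]
  · rw [if_neg, hag (i, j) hc]
    rintro ⟨hD', hcol, hval'⟩
    rw [hag (i, j) hc] at hval'
    exact hnob (i, j) hD' hcol hval'

lemma highest_val (κ : YoungDiagram) {c : ℕ × ℕ} (hc : c ∈ κ.cells) :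
    (fun i j => if (i, j) ∈ κ.cells then i else 0) c.1 c.2 = c.1 := if_pos hc

lemma highest_ssyt (κ : YoungDiagram) :
    SsytOn κ.cells (fun i j => if (i, j) ∈ κ.cells then i else 0) := by
  refine ⟨?_, ?_, ?_⟩
  · intro i j1 j2 _ hm1 hm2
    simp only [if_pos hm1, if_pos hm2]
    exact le_refl i
  · intro i1 i2 j hlt hm1 hm2
    simp only [if_pos hm1, if_pos hm2]
    exact hlt
  · intro i j hm
    simp only [if_neg hm]

lemma highest_entries (κ : YoungDiagram) {s : ℕ} (hrows : κ.colLen 0 ≤ s) :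
    EntriesLT κ.cells s (fun i j => if (i, j) ∈ κ.cells then i else 0) := by
  intro c hc
  rw [highest_val κ hc]
  have hc0 : (c.1, 0) ∈ κ := κ.up_left_mem (le_refl _) (Nat.zero_le _) ((κ.mem_cells _).mp hc)
  have := YoungDiagram.mem_iff_lt_colLen.mp hc0
  omega

lemma highest_hval_nonpos (κ : YoungDiagram) (T : Filling)
    (hTH : ∀ c ∈ κ.cells, T c.1 c.2 = c.1) (a j : ℕ) : hval κ.cells T a j ≤ 0 := by
  unfold hval
  have hcard : (κ.cells.filter (fun c => j ≤ c.2 ∧ T c.1 c.2 = a + 1)).card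
      ≤ (κ.cells.filter (fun c => j ≤ c.2 ∧ T c.1 c.2 = a)).card := by
    apply Finset.card_le_card_of_injOn (fun c => (a, c.2))
    · intro c hc
      rw [Finset.mem_coe, Finset.mem_filter] at hc
      obtain ⟨hcD, hle, hv⟩ := hc
      rw [hTH c hcD] at hv
      have hmem : (a, c.2) ∈ κ.cells := cells_UL κ (show a ≤ c.1 by omega) (le_refl c.2) hcD
      rw [Finset.mem_coe, Finset.mem_filter]
      exact ⟨hmem, hle, hTH (a, c.2) hmem⟩
    · intro c hc c' hc' he
      rw [Finset.mem_coe, Finset.mem_filter] at hc hc'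
      obtain ⟨hcD, _, hv⟩ := hc
      obtain ⟨hcD', _, hv'⟩ := hc'
      rw [hTH c hcD] at hv
      rw [hTH c' hcD'] at hv'
      simp only [Prod.mk.injEq, true_and] at he
      exact Prod.ext (by omega) he
  omega

lemma highest_eOp_none (κ : YoungDiagram) (a : ℕ) :
    eOp κ.cells a (fun i j => if (i, j) ∈ κ.cells then i else 0) = none := by
  rw [eOp_eq_none_iff]
  apply Finset.sup'_le
  intro j _
  exact highest_hval_nonpos κ _ (fun c hc => if_pos hc) a j

lemma highest_unique (κ : YoungDiagram) (s : ℕ) (T : Filling) (hT : SsytOn κ.cells T)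
    (hE : EntriesLT κ.cells s T) (hnone : ∀ a, a + 1 < s → eOp κ.cells a T = none) :
    T = fun i j => if (i, j) ∈ κ.cells then i else 0 := by
  have key : ∀ i j, (i, j) ∈ κ.cells → T i j = i := by
    intro i
    induction i using Nat.strong_induction_on with
    | _ i IH =>
      intro j hj
      by_contra hne
      set b := T i j with hb
      have hige : i ≤ b := by
        rcases Nat.eq_zero_or_pos i with h0 | h0
        · omega
        · have hm' : (i - 1, j) ∈ κ.cells := cells_UL κ (by omega) (le_refl _) hj
          have h1 : T (i - 1) j = i - 1 := IH (i - 1) (by omega) j hm'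
          have h2 := hT.2.1 (i - 1) i j (by omega) hm' hj
          omega
      have hbge : i + 1 ≤ b := by omega
      have hbs : b < s := hE (i, j) hj
      set a := b - 1 with ha
      have ha1 : a + 1 = b := by omega
      have hM := eOp_eq_none_iff.mp (hnone a (by omega))
      have hle : hval κ.cells T a j ≤ Mh κ.cells T a :=
        hval_le_Mh (Finset.mem_range.mpr (col_lt_width hj))
      have h1 : 1 ≤ (κ.cells.filter (fun c => j ≤ c.2 ∧ T c.1 c.2 = a + 1)).card :=
        Finset.card_pos.mpr ⟨(i, j), Finset.mem_filter.mpr ⟨hj, le_refl _, by show T i j = a + 1; omega⟩⟩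
      have h2 : (κ.cells.filter (fun c => j ≤ c.2 ∧ T c.1 c.2 = a)).card = 0 := by
        rw [Finset.card_eq_zero, Finset.filter_eq_empty_iff]
        rintro ⟨i', j'⟩ hm ⟨hlej, hv⟩
        simp only at hlej hv
        rcases lt_trichotomy i' i with hc | hc | hc
        · have := IH i' hc j' hm
          omega
        · subst hc
          have := hT.1 i' j j' hlej hj hm
          omega
        · have hmu : (i, j') ∈ κ.cells := cells_UL κ (by omega) (le_refl _) hm
          have hr := hT.1 i j j' hlej hj hmu
          have hcol := hT.2.1 i i' j' hc hmu hm
          omega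
      have : 0 < hval κ.cells T a j := by
        unfold hval
        omega
      omega
  funext i j
  by_cases hm : (i, j) ∈ κ.cells
  · rw [if_pos hm]
    exact key i j hm
  · rw [if_neg hm]
    exact hT.2.2 i j hm

lemma eOp_sum {D : Shape} {T T' : Filling} {a : ℕ} (hT : SsytOn D T)
    (h : eOp D a T = some T') :
    (∑ c ∈ D, T' c.1 c.2) + 1 = ∑ c ∈ D, T c.1 c.2 := by
  obtain ⟨c0, hc0D, hvc0, hv', hag, _, _, _, _, _, _⟩ := eOp_anatomy hT h
  rw [← Finset.sum_erase_add D _ hc0D, ← Finset.sum_erase_add D (fun c => T c.1 c.2) hc0D]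
  have hsame : ∑ c ∈ D.erase c0, T' c.1 c.2 = ∑ c ∈ D.erase c0, T c.1 c.2 :=
    Finset.sum_congr rfl (fun c hc => hag c (Finset.ne_of_mem_erase hc))
  omega

lemma connected (κ : YoungDiagram) (s : ℕ) :
    ∀ T, SsytOn κ.cells T → EntriesLT κ.cells s T →
      Relation.ReflTransGen (fun x y => ∃ a, a + 1 < s ∧ eOp κ.cells a x = some y) T
        (fun i j => if (i, j) ∈ κ.cells then i else 0) := by
  have main : ∀ n (T : Filling), (∑ c ∈ κ.cells, T c.1 c.2) = n →
      SsytOn κ.cells T → EntriesLT κ.cells s T →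
      Relation.ReflTransGen (fun x y => ∃ a, a + 1 < s ∧ eOp κ.cells a x = some y) T
        (fun i j => if (i, j) ∈ κ.cells then i else 0) := by
    intro n
    induction n using Nat.strong_induction_on with
    | _ n IH =>
      intro T hsum hT hE
      by_cases hall : ∀ a, a + 1 < s → eOp κ.cells a T = none
      · rw [highest_unique κ s T hT hE hall]
      · push_neg at hall
        obtain ⟨a, ha, hne⟩ := hall
        rcases he : eOp κ.cells a T with _ | T'
        · exact absurd he hne
        · obtain ⟨hT', hE'⟩ := eOp_preserves κ hT hE he
          have hsum' := eOp_sum hT he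
          exact Relation.ReflTransGen.head ⟨a, ha, he⟩
            (IH (∑ c ∈ κ.cells, T' c.1 c.2) (by omega) T' rfl hT' hE')
  intro T hT hE
  exact main _ T rfl hT hE



/-- For a partition `κ` with (at most) `s` parts, the set of
semistandard tableaux of shape `κ` with entries in `{0, …, s-1}`, with the
Kashiwara–Nakashima operators `e_a, f_a` (`a + 1 < s`) and weight given by the
content, is a connected crystal with a unique highest weight element, namely
the tableau of shape and content `κ` (row `i` filled with `i`). -/
theorem tableau_crystal (s : ℕ) (κ : YoungDiagram) (hrows : κ.colLen 0 ≤ s) :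
    -- the operators preserve the tableau set
    (∀ a T T', a + 1 < s → SsytOn κ.cells T → EntriesLT κ.cells s T →
        (eOp κ.cells a T = some T' ∨ fOp κ.cells a T = some T') →
        SsytOn κ.cells T' ∧ EntriesLT κ.cells s T') ∧
    -- crystal axiom (i): φ_a - ε_a = ⟨wt, α_a^∨⟩
    (∀ a T, a + 1 < s → SsytOn κ.cells T → EntriesLT κ.cells s T →
        (phiNum κ.cells a T : ℤ) - (epsNum κ.cells a T : ℤ) =
          (content κ.cells T a : ℤ) - (content κ.cells T (a + 1) : ℤ)) ∧
    -- crystal axiom (ii): e_a adds the simple root α_a to the weight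
    (∀ a T T', a + 1 < s → SsytOn κ.cells T → EntriesLT κ.cells s T →
        eOp κ.cells a T = some T' →
        content κ.cells T' a = content κ.cells T a + 1 ∧
        content κ.cells T (a + 1) = content κ.cells T' (a + 1) + 1 ∧
        ∀ b, b ≠ a → b ≠ a + 1 → content κ.cells T' b = content κ.cells T b) ∧
    -- crystal axiom (ii): f_a subtracts the simple root α_a from the weight
    (∀ a T T', a + 1 < s → SsytOn κ.cells T → EntriesLT κ.cells s T →
        fOp κ.cells a T = some T' →
        content κ.cells T a = content κ.cells T' a + 1 ∧
        content κ.cells T' (a + 1) = content κ.cells T (a + 1) + 1 ∧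
        ∀ b, b ≠ a → b ≠ a + 1 → content κ.cells T' b = content κ.cells T b) ∧
    -- crystal axiom (iii): T' = e_a · T iff T = f_a · T'
    (∀ a T T', a + 1 < s → SsytOn κ.cells T → EntriesLT κ.cells s T →
        SsytOn κ.cells T' → EntriesLT κ.cells s T' →
        (eOp κ.cells a T = some T' ↔ fOp κ.cells a T' = some T)) ∧
    -- the tableau of shape and content κ is the unique highest weight element
    (SsytOn κ.cells (fun i j => if (i, j) ∈ κ.cells then i else 0) ∧
      EntriesLT κ.cells s (fun i j => if (i, j) ∈ κ.cells then i else 0) ∧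
      (∀ a, a + 1 < s →
        eOp κ.cells a (fun i j => if (i, j) ∈ κ.cells then i else 0) = none) ∧
      (∀ T, SsytOn κ.cells T → EntriesLT κ.cells s T →
        (∀ a, a + 1 < s → eOp κ.cells a T = none) →
        T = fun i j => if (i, j) ∈ κ.cells then i else 0)) ∧
    -- connectedness: every tableau is raised to the highest weight element
    (∀ T, SsytOn κ.cells T → EntriesLT κ.cells s T →
      Relation.ReflTransGen (fun x y => ∃ a, a + 1 < s ∧ eOp κ.cells a x = some y) T
        (fun i j => if (i, j) ∈ κ.cells then i else 0)) := by
  refine ⟨?_, ?_, ?_, ?_, ?_, ⟨highest_ssyt κ, highest_entries κ hrows,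
    fun a _ => highest_eOp_none κ a,
    fun T hT hE hn => highest_unique κ s T hT hE hn⟩, connected κ s⟩
  · rintro a T T' ha hT hE (h | h)
    · exact eOp_preserves κ hT hE h
    · exact fOp_preserves κ ha hT hE h
  · intro a T ha hT hE
    exact phi_sub_eps κ ha hT hE
  · intro a T T' _ hT _ h
    exact eOp_content hT h
  · intro a T T' _ hT _ h
    exact fOp_content hT h
  · intro a T T' _ hT _ hT' _
    exact ⟨fun h => e_then_f hT h, fun h => f_then_e hT' h⟩

end PaperFormal
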